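/- Suppose a² + bc = 1 with a, b, c integers, a odd, and b, c even. Write a = 2n+1, b = 2b', c = 2c'. Then there exist integers x, y, z, w with xw − yz = 1, wx = n+1, yz = n, wy = b', and xz = −c'; consequently [[x,y],[z,w]]⁻¹ · [[1,0],[0,−1]] · [[x,y],[z,w]] = [[a,b],[c,−a]]. -/

import Mathlib

open Matrix

lemma mat_aux (x y z w a b c n b' c' : ℤ)
    (h1 : x * w - y * z = 1) (h2 : w * x = n + 1) (h3 : y * z = n)
    (h4 : w * y = b') (h5 : x * z = -c')
    (ha : a = 2 * n + 1) (hb : b = 2 * b') (hc : c = 2 * c') :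
    (!![x, y; z, w] : Matrix (Fin 2) (Fin 2) ℤ)⁻¹ * !![1, 0; 0, -1] * !![x, y; z, w] =
      !![a, b; c, -a] := by
  have hdet : (!![x, y; z, w] : Matrix (Fin 2) (Fin 2) ℤ).det = 1 := by
    simp [Matrix.det_fin_two_of]; linarith
  rw [Matrix.inv_def, hdet, Matrix.adjugate_fin_two_of]
  simp only [Ring.inverse_one, one_smul]
  ext i j
  fin_cases i <;> fin_cases j <;>
    simp [Matrix.mul_apply, Fin.sum_univ_two] <;> nlinarith [h1, h2, h3, h4, h5]

theorem gl2_factorization_conjugation (a b c n b' c' : ℤ)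
    (h : a ^ 2 + b * c = 1) (ha : a = 2 * n + 1) (hb : b = 2 * b') (hc : c = 2 * c') :
    ∃ x y z w : ℤ, x * w - y * z = 1 ∧ w * x = n + 1 ∧ y * z = n ∧
      w * y = b' ∧ x * z = -c' ∧
      (!![x, y; z, w] : Matrix (Fin 2) (Fin 2) ℤ)⁻¹ * !![1, 0; 0, -1] * !![x, y; z, w] =
        !![a, b; c, -a] := by
  have key : b' * c' = -(n * (n + 1)) := by
    subst ha hb hc; nlinarith [h]
  -- produce x, y, z, w with the scalar equations
  obtain ⟨x, y, z, w, e1, e2, e3, e4, e5⟩ :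
      ∃ x y z w : ℤ, x * w - y * z = 1 ∧ w * x = n + 1 ∧ y * z = n ∧
        w * y = b' ∧ x * z = -c' := by
    by_cases hcase : n + 1 = 0 ∧ b' = 0
    · obtain ⟨h1, h2⟩ := hcase
      refine ⟨c', 1, -1, 0, by ring, by omega, by omega, by omega, by ring⟩
    · set g : ℕ := Int.gcd (n + 1) b' with hg
      have hg0 : (g : ℤ) ≠ 0 := by
        simp only [hg, Ne, Int.natCast_eq_zero, Int.gcd_eq_zero_iff]
        tauto
      have hdx : (g : ℤ) ∣ n + 1 := Int.gcd_dvd_left (n + 1) b'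
      have hdy : (g : ℤ) ∣ b' := Int.gcd_dvd_right (n + 1) b'
      set x := (n + 1) / (g : ℤ) with hx
      set y := b' / (g : ℤ) with hy
      have ex : (g : ℤ) * x = n + 1 := Int.mul_ediv_cancel' hdx
      have ey : (g : ℤ) * y = b' := Int.mul_ediv_cancel' hdy
      have hcop : IsCoprime x y := by
        rw [Int.isCoprime_iff_gcd_eq_one]
        apply Int.gcd_div_gcd_div_gcd
        exact Nat.pos_of_ne_zero (by exact_mod_cast hg0)
      have hyc : y * c' = -(n * x) := by
        have hk : ((g:ℤ) * y) * c' = -(n * ((g:ℤ) * x)) := by rw [ex, ey]; exact key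
        have : (g : ℤ) * (y * c') = (g : ℤ) * (-(n * x)) := by linear_combination hk
        exact mul_left_cancel₀ hg0 this
      by_cases hy0 : y = 0
      · -- then b' = 0, so n + 1 ≠ 0; n * x = 0 and x ≠ 0 so n = 0, g * x = 1
        have hb'0 : b' = 0 := by rw [← ey, hy0, mul_zero]
        have hn1 : n + 1 ≠ 0 := fun hn => hcase ⟨hn, hb'0⟩
        have hx0 : x ≠ 0 := fun hx0 => hn1 (by rw [← ex, hx0, mul_zero])
        have hn : n = 0 := by
          rcases mul_eq_zero.mp (by rw [hy0] at hyc; linarith : n * x = 0) with h | h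
          · exact h
          · exact absurd h hx0
        have hgx : (g : ℤ) * x = 1 := by rw [ex, hn]; norm_num
        have hg1 : (g : ℤ) = 1 :=
          Int.eq_one_of_mul_eq_one_left (Int.natCast_nonneg g) (show x * (g:ℤ) = 1 by linear_combination hgx)
        have hx1 : x = 1 := by rw [hg1, one_mul] at hgx; exact hgx
        refine ⟨1, 0, -c', 1, by ring, by simp [hn], by simp [hn], by simp [hb'0], by ring⟩
      · -- y ∣ n, set z = n / y
        have hydvd : y ∣ n := by
          have : y ∣ n * x := ⟨-c', by linarith [hyc]⟩
          exact (hcop.symm.dvd_of_dvd_mul_right this)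
        set z := n / y with hz
        have ez : y * z = n := Int.mul_ediv_cancel' hydvd
        have exz : x * z = -c' := by
          have : y * (x * z) = y * (-c') := by linear_combination x * ez + hyc
          exact mul_left_cancel₀ hy0 this
        exact ⟨x, y, z, (g : ℤ), by linear_combination ex - ez, ex, ez, ey, exz⟩
  exact ⟨x, y, z, w, e1, e2, e3, e4, e5, mat_aux x y z w a b c n b' c' e1 e2 e3 e4 e5 ha hb hc⟩
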